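/- Let G be the nonabelian group of order pq, where p < q are primes with p dividing q - 1. Then D(G) = 1 + q + pq, and in particular G is neither almost Leinster nor quasi-Leinster, i.e., D(G) ≠ 2pq - 1 and D(G) ≠ 2pq + 1. -/

import Mathlib

open Pointwise


/-- Sum of the orders of all normal subgroups of `G`. -/
noncomputable def D (G : Type*) [Group G] : ℕ :=
  ∑ᶠ N ∈ {N : Subgroup G | N.Normal}, Nat.card N

theorem nonabelian_pq_D (G : Type*) [Group G] [Finite G]
    (p q : ℕ) (hp : p.Prime) (hq : q.Prime) (hlt : p < q) (hdvd : p ∣ q - 1)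
    (hcard : Nat.card G = p * q) (hna : ¬ ∀ a b : G, a * b = b * a) :
    D G = 1 + q + p * q ∧ D G ≠ 2 * (p * q) - 1 ∧ D G ≠ 2 * (p * q) + 1 := by
  classical
  haveI : Fact p.Prime := ⟨hp⟩
  haveI : Fact q.Prime := ⟨hq⟩
  have hpq : p ≠ q := ne_of_lt hlt
  have hcop : Nat.Coprime p q := (Nat.coprime_primes hp hq).mpr hpq
  -- the Sylow q-subgroup
  obtain ⟨Q⟩ : Nonempty (Sylow q G) := inferInstance
  have hfactor : (p * q).factorization q = 1 := by
    rw [Nat.factorization_mul hp.ne_zero hq.ne_zero]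
    simp [hp.factorization, hq.factorization, Finsupp.single_apply, hpq]
  have hQcard : Nat.card Q = q := by
    rw [Q.card_eq_multiplicity, hcard, hfactor, pow_one]
  have hQindex : (Q : Subgroup G).index = p := by
    have := Subgroup.card_mul_index (Q : Subgroup G)
    rw [hcard, hQcard] at this
    have : q * (Q : Subgroup G).index = q * p := by rw [this]; ring
    exact Nat.eq_of_mul_eq_mul_left hq.pos this
  -- Q is normal
  have hsyl1 : Nat.card (Sylow q G) = 1 := by
    have hdvd1 : Nat.card (Sylow q G) ∣ p := hQindex ▸ Sylow.card_dvd_index Q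
    have hmod : Nat.card (Sylow q G) ≡ 1 [MOD q] := card_sylow_modEq_one q G
    rcases (Nat.Prime.eq_one_or_self_of_dvd hp _ hdvd1) with h1 | h1
    · exact h1
    · exfalso
      rw [h1] at hmod
      have : p % q = 1 % q := hmod
      rw [Nat.mod_eq_of_lt hlt, Nat.mod_eq_of_lt hq.one_lt] at this
      exact hp.one_lt.ne' this
  have hQnorm : (Q : Subgroup G).Normal := by
    rw [← Subgroup.normalizer_eq_top_iff]
    rw [← Subgroup.index_eq_one]
    exact (Sylow.card_eq_index_normalizer Q).symm.trans hsyl1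
  -- classification of normal subgroups
  have hclass : ∀ N : Subgroup G, N.Normal → N = ⊥ ∨ N = (Q : Subgroup G) ∨ N = ⊤ := by
    intro N hN
    have hNd : Nat.card N ∣ p * q := hcard ▸ Subgroup.card_subgroup_dvd_card N
    by_cases hqd : q ∣ Nat.card N
    · by_cases hpd : p ∣ Nat.card N
      · right; right
        have : p * q ∣ Nat.card N := Nat.Coprime.mul_dvd_of_dvd_of_dvd hcop hpd hqd
        exact Subgroup.eq_top_of_card_eq N (by rw [hcard]; exact Nat.dvd_antisymm hNd this)
      · -- card N = q
        have hcopN : (Nat.card N).Coprime p := (hp.coprime_iff_not_dvd.mpr hpd).symm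
        have hNq : Nat.card N ∣ q := by
          rw [mul_comm] at hNd
          exact hcopN.dvd_of_dvd_mul_right hNd
        have hNcard : Nat.card N = q := Nat.dvd_antisymm hNq hqd
        right; left
        -- N is a Sylow q-subgroup, and Q is the unique one
        have hNmult : Nat.card N = q ^ (Nat.card G).factorization q := by
          rw [hcard, hfactor, pow_one, hNcard]
        haveI := Sylow.unique_of_normal Q hQnorm
        have := Subsingleton.elim (Sylow.ofCard N hNmult) Q
        calc N = ((Sylow.ofCard N hNmult : Sylow q G) : Subgroup G) :=
                (Sylow.coe_ofCard N hNmult).symm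
          _ = (Q : Subgroup G) := by rw [this]
    · by_cases hpd : p ∣ Nat.card N
      · -- card N = p : contradiction with nonabelian
        exfalso
        have hcopN : (Nat.card N).Coprime q := (hq.coprime_iff_not_dvd.mpr hqd).symm
        have hNp : Nat.card N ∣ p := hcopN.dvd_of_dvd_mul_right hNd
        have hNcard : Nat.card N = p := Nat.dvd_antisymm hNp hpd
        apply hna
        -- N and Q are disjoint normal subgroups
        have hdisj : Disjoint N (Q : Subgroup G) := by
          rw [disjoint_iff]
          rw [← Subgroup.card_eq_one]
          have h1 : Nat.card (N ⊓ (Q : Subgroup G) : Subgroup G) ∣ p := by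
            rw [← hNcard]; exact Subgroup.card_dvd_of_le inf_le_left
          have h2 : Nat.card (N ⊓ (Q : Subgroup G) : Subgroup G) ∣ q :=
            (Subgroup.card_dvd_of_le inf_le_right).trans hQcard.dvd
          exact Nat.eq_one_of_dvd_coprimes hcop h1 h2
        have hcomm := Subgroup.commute_of_normal_of_disjoint N (Q : Subgroup G) hN hQnorm hdisj
        -- N ⊔ Q = ⊤
        have hsup : N ⊔ (Q : Subgroup G) = ⊤ := by
          apply Subgroup.eq_top_of_card_eq
          have h1 : p ∣ Nat.card (N ⊔ (Q : Subgroup G) : Subgroup G) := by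
            rw [← hNcard]; exact Subgroup.card_dvd_of_le le_sup_left
          have h2 : q ∣ Nat.card (N ⊔ (Q : Subgroup G) : Subgroup G) :=
            hQcard.symm.dvd.trans (Subgroup.card_dvd_of_le le_sup_right)
          have h3 : p * q ∣ Nat.card (N ⊔ (Q : Subgroup G) : Subgroup G) :=
            Nat.Coprime.mul_dvd_of_dvd_of_dvd hcop h1 h2
          have h4 : Nat.card (N ⊔ (Q : Subgroup G) : Subgroup G) ∣ p * q :=
            hcard ▸ Subgroup.card_subgroup_dvd_card _
          rw [hcard]
          exact Nat.dvd_antisymm h4 h3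
        -- N and Q are abelian (cyclic of prime order)
        have hcommN : ∀ x y : G, x ∈ N → y ∈ N → x * y = y * x := by
          obtain ⟨g, hg⟩ := (isCyclic_of_prime_card (p := p) hNcard).exists_generator
          intro x y hx hy
          obtain ⟨a, ha⟩ := hg ⟨x, hx⟩
          obtain ⟨b, hb⟩ := hg ⟨y, hy⟩
          have hxa : x = (g : G) ^ a := by simpa using congrArg Subtype.val ha.symm
          have hyb : y = (g : G) ^ b := by simpa using congrArg Subtype.val hb.symm
          rw [hxa, hyb, ← zpow_add, ← zpow_add, add_comm]
        have hcommQ : ∀ x y : G, x ∈ (Q : Subgroup G) → y ∈ (Q : Subgroup G) → x * y = y * x := by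
          obtain ⟨g, hg⟩ := (isCyclic_of_prime_card (p := q) hQcard).exists_generator
          intro x y hx hy
          obtain ⟨a, ha⟩ := hg ⟨x, hx⟩
          obtain ⟨b, hb⟩ := hg ⟨y, hy⟩
          have hxa : x = (g : G) ^ a := by simpa using congrArg Subtype.val ha.symm
          have hyb : y = (g : G) ^ b := by simpa using congrArg Subtype.val hb.symm
          rw [hxa, hyb, ← zpow_add, ← zpow_add, add_comm]
        intro a b
        have ha : a ∈ (↑N : Set G) * ((Q : Subgroup G) : Set G) := by
          rw [← Subgroup.mul_normal]; rw [hsup]; trivial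
        have hb : b ∈ (↑N : Set G) * ((Q : Subgroup G) : Set G) := by
          rw [← Subgroup.mul_normal]; rw [hsup]; trivial
        obtain ⟨n1, hn1, m1, hm1, rfl⟩ := ha
        obtain ⟨n2, hn2, m2, hm2, rfl⟩ := hb
        have c12 : m1 * n2 = n2 * m1 := (hcomm n2 m1 hn2 hm1).symm
        have c21 : m2 * n1 = n1 * m2 := (hcomm n1 m2 hn1 hm2).symm
        calc n1 * m1 * (n2 * m2) = n1 * (m1 * n2) * m2 := by group
          _ = n1 * n2 * (m1 * m2) := by rw [c12]; group
          _ = n2 * n1 * (m2 * m1) := by rw [hcommN n1 n2 hn1 hn2, hcommQ m1 m2 hm1 hm2]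
          _ = n2 * (m2 * n1) * m1 := by rw [c21]; group
          _ = n2 * m2 * (n1 * m1) := by group
      · -- card N = 1
        left
        have hcopN : (Nat.card N).Coprime q := (hq.coprime_iff_not_dvd.mpr hqd).symm
        have hNp : Nat.card N ∣ p := hcopN.dvd_of_dvd_mul_right hNd
        rcases hp.eq_one_or_self_of_dvd _ hNp with h1 | h1
        · exact Subgroup.card_eq_one.mp h1
        · exact absurd (h1 ▸ dvd_refl _) hpd
  -- the set of normal subgroups
  have hset : {N : Subgroup G | N.Normal} =
      ↑({⊥, (Q : Subgroup G), ⊤} : Finset (Subgroup G)) := by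
    ext N
    simp only [Set.mem_setOf_eq, Finset.coe_insert, Set.mem_insert_iff, Finset.coe_singleton,
      Set.mem_singleton_iff]
    constructor
    · exact hclass N
    · rintro (rfl | rfl | rfl)
      · infer_instance
      · exact hQnorm
      · infer_instance
  have hbotQ : (⊥ : Subgroup G) ≠ (Q : Subgroup G) := by
    intro h
    have := hQcard
    rw [← h, Subgroup.card_bot] at this
    exact hq.one_lt.ne this
  have hbotT : (⊥ : Subgroup G) ≠ ⊤ := by
    intro h
    have := Subgroup.card_top (G := G)
    rw [← h, Subgroup.card_bot, hcard] at this
    nlinarith [hp.two_le, hq.two_le]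
  have hQT : (Q : Subgroup G) ≠ ⊤ := by
    intro h
    have := hQcard
    rw [h, Subgroup.card_top, hcard] at this
    nlinarith [hp.two_le, hq.two_le]
  have hD : D G = 1 + q + p * q := by
    rw [D, hset, finsum_mem_coe_finset]
    rw [Finset.sum_insert (by simp [hbotQ, hbotT]), Finset.sum_insert (by simp [hQT]),
      Finset.sum_singleton, Subgroup.card_bot, Subgroup.card_top, hcard]
    have : Nat.card (Q : Subgroup G) = q := hQcard
    rw [this]
    ring
  refine ⟨hD, ?_, ?_⟩ <;> rw [hD]
  · intro h
    have h2q : 2 * q ≤ p * q := Nat.mul_le_mul_right q hp.two_le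
    have h3 : 3 ≤ q := by have := hp.two_le; omega
    omega
  · intro h
    have h2q : 2 * q ≤ p * q := Nat.mul_le_mul_right q hp.two_le
    have h3 : 3 ≤ q := by have := hp.two_le; omega
    omega
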